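/- Let κ ≥ 4 be an integer. There exist ε₀ > 0 and C > 0, depending only on κ, such that for every 0 < ε ≤ ε₀ and all dyadic squares J₀ and K₀ in ℝ², Σ_{n=1}^{∞} Σ_{(J₁,…,J_{n−1})} Π_{k=1}^{n} ε · 2^{-κ · dtree(J_{k−1}, J_k)} ≤ C ε · 2^{-(κ−3) · dtree(J₀, K₀)}, where for each n the inner sum runs over all chains of dyadic squares J₁, …, J_{n−1} with J_n = K₀ and J_{k−1} ≠ J_k for 1 ≤ k ≤ n. -/

import Mathlib

/-!
STATEMENT 15: Chain-sum estimate (core of Lemma `T inv well`). For an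
integer `κ ≥ 4` there are `ε₀ > 0` and `C > 0` depending only on `κ` such
that for `0 < ε ≤ ε₀` and all dyadic squares `J₀, K₀`,
`Σ_{n=1}^∞ Σ_{(J₁,…,J_{n−1})} Π_{k=1}^n ε·2^{-κ·dtree(J_{k−1},J_k)}
  ≤ C ε · 2^{-(κ−3)·dtree(J₀,K₀)}`,
where for each `n` the inner sum runs over all chains `J₁, …, J_{n−1}` of
dyadic squares with `J_n = K₀` and `J_{k−1} ≠ J_k` for `1 ≤ k ≤ n`.

A chain of length `n ≥ 1` is encoded as a tuple `c : Fin (n+1) → DyadicSq`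
with `c 0 = J₀`, `c n = K₀` and consecutive entries distinct; the outer sum
over `n ≥ 1` is written as a sum over `n : ℕ` of chains of length `n + 1`.
The summand `2^{-λ·d}` is encoded by the weight `treeWeight λ d` valued in
`ℝ≥0∞` (with the convention `2^{-λ·⊤} = 0`), so that all `tsum`s are
defined.
-/

/-- A dyadic square in ℝ²: level `k : ℤ` and position `m : Fin 2 → ℤ`,
representing the set `2^{-k}(m + [0,1)²)`. -/
abbrev DyadicSq : Type := ℤ × (Fin 2 → ℤ)

/-- The dyadic parent: the unique dyadic square of the next coarser level
containing the given square. -/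
def parentSq (I : DyadicSq) : DyadicSq :=
  (I.1 - 1, fun i => Int.ediv (I.2 i) 2)

/-- Adjacency in the dyadic tree: one square is the parent of the other. -/
def adjSq (I J : DyadicSq) : Prop := parentSq I = J ∨ parentSq J = I

/-- There is a path of length `d` from `I` to `J` in the dyadic tree. -/
def chainSq (d : ℕ) (I J : DyadicSq) : Prop :=
  ∃ c : ℕ → DyadicSq, c 0 = I ∧ c d = J ∧ ∀ k < d, adjSq (c k) (c (k + 1))

/-- The tree distance: the length of the shortest path joining `I` and `J`
in the dyadic tree (`⊤` if there is none). -/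
noncomputable def dtree (I J : DyadicSq) : ℕ∞ :=
  ⨅ (n : ℕ) (_ : chainSq n I J), (n : ℕ∞)

/-- The weight `2^{-λ·d}`, with the convention that it vanishes when
`d = ⊤`. -/
noncomputable def treeWeight (lam : ℝ) (d : ℕ∞) : ENNReal :=
  if d = ⊤ then 0 else ENNReal.ofReal ((2 : ℝ) ^ (-(lam * (d.toNat : ℝ))))


/- ### treeWeight basics -/

lemma treeWeight_top (a : ℝ) : treeWeight a ⊤ = 0 := if_pos rfl

lemma treeWeight_coe (a : ℝ) (d : ℕ) :
    treeWeight a (d : ℕ∞) = ENNReal.ofReal ((2 : ℝ) ^ (-(a * (d : ℝ)))) := by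
  simp [treeWeight]

lemma treeWeight_zero (a : ℝ) : treeWeight a 0 = 1 := by
  have : ((0 : ℕ) : ℕ∞) = 0 := rfl
  rw [← this, treeWeight_coe]
  norm_num

lemma treeWeight_add_exp (a b : ℝ) (d : ℕ∞) :
    treeWeight (a + b) d = treeWeight a d * treeWeight b d := by
  cases d using ENat.recTopCoe with
  | top => simp [treeWeight_top]
  | coe d =>
    rw [treeWeight_coe, treeWeight_coe, treeWeight_coe,
      ← ENNReal.ofReal_mul (by positivity),
      ← Real.rpow_add (by norm_num : (0:ℝ) < 2)]
    ring_nf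

lemma treeWeight_add (a : ℝ) (d e : ℕ∞) :
    treeWeight a (d + e) = treeWeight a d * treeWeight a e := by
  cases d using ENat.recTopCoe with
  | top => simp [treeWeight_top]
  | coe d =>
    cases e using ENat.recTopCoe with
    | top => simp [treeWeight_top]
    | coe e =>
      have : ((d : ℕ∞) + e) = ((d + e : ℕ) : ℕ∞) := by push_cast; ring
      rw [this, treeWeight_coe, treeWeight_coe, treeWeight_coe,
        ← ENNReal.ofReal_mul (by positivity),
        ← Real.rpow_add (by norm_num : (0:ℝ) < 2)]
      push_cast
      ring_nf

lemma treeWeight_anti {a : ℝ} (ha : 0 ≤ a) {d e : ℕ∞} (h : d ≤ e) :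
    treeWeight a e ≤ treeWeight a d := by
  cases e using ENat.recTopCoe with
  | top => simp [treeWeight_top]
  | coe e =>
    cases d using ENat.recTopCoe with
    | top => simp at h
    | coe d =>
      rw [treeWeight_coe, treeWeight_coe]
      apply ENNReal.ofReal_le_ofReal
      apply Real.rpow_le_rpow_of_exponent_le (by norm_num)
      have : (d : ℝ) ≤ (e : ℝ) := by exact_mod_cast h
      nlinarith

lemma treeWeight_le_one {a : ℝ} (ha : 0 ≤ a) (d : ℕ∞) : treeWeight a d ≤ 1 := by
  have := treeWeight_anti ha (zero_le : (0:ℕ∞) ≤ d)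
  rwa [treeWeight_zero] at this
/- ### dtree basics -/

lemma dtree_le {n : ℕ} {I J : DyadicSq} (h : chainSq n I J) : dtree I J ≤ n :=
  iInf₂_le n h

lemma dtree_eq_top {I J : DyadicSq} (h : ∀ n, ¬ chainSq n I J) : dtree I J = ⊤ := by
  simp [dtree, h]

lemma dtree_spec {I J : DyadicSq} (h : dtree I J ≠ ⊤) :
    ∃ d : ℕ, chainSq d I J ∧ dtree I J = d := by
  have hne : ∃ n, chainSq n I J := by
    by_contra hc
    push_neg at hc
    exact h (dtree_eq_top hc)
  classical
  refine ⟨Nat.find hne, Nat.find_spec hne, le_antisymm (dtree_le (Nat.find_spec hne)) ?_⟩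
  refine le_iInf₂ fun n hn => ?_
  exact_mod_cast Nat.find_min' hne hn

lemma chainSq_trans {m n : ℕ} {I J K : DyadicSq} (h₁ : chainSq m I J)
    (h₂ : chainSq n J K) : chainSq (m + n) I K := by
  obtain ⟨c₁, hc10, hc1m, hc1a⟩ := h₁
  obtain ⟨c₂, hc20, hc2n, hc2a⟩ := h₂
  refine ⟨fun k => if k ≤ m then c₁ k else c₂ (k - m), by simpa using hc10, ?_, ?_⟩
  · by_cases hn : m + n ≤ m
    · have : n = 0 := by omega
      subst this
      simp only [if_pos hn]
      rw [show m + 0 = m from rfl, hc1m, ← hc20, ← hc2n]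
    · simp only [if_neg hn]
      rw [show m + n - m = n from by omega, hc2n]
  · intro k hk
    by_cases h1 : k + 1 ≤ m
    · simp only [if_pos h1, if_pos (by omega : k ≤ m)]
      exact hc1a k (by omega)
    · by_cases h2 : k ≤ m
      · have hkm : k = m := by omega
        subst hkm
        simp only [if_pos h2, if_neg h1]
        rw [hc1m, ← hc20, show k + 1 - k = 0 + 1 from by omega]
        exact hc2a 0 (by omega)
      · simp only [if_neg h1, if_neg h2]
        rw [show k + 1 - m = (k - m) + 1 from by omega]
        exact hc2a (k - m) (by omega)

lemma dtree_triangle (I J K : DyadicSq) : dtree I K ≤ dtree I J + dtree J K := by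
  by_cases h₁ : dtree I J = ⊤
  · simp [h₁]
  by_cases h₂ : dtree J K = ⊤
  · simp [h₂]
  obtain ⟨m, hm, hm'⟩ := dtree_spec h₁
  obtain ⟨n, hn, hn'⟩ := dtree_spec h₂
  rw [hm', hn']
  calc dtree I K ≤ ((m + n : ℕ) : ℕ∞) := dtree_le (chainSq_trans hm hn)
  _ = (m : ℕ∞) + n := by push_cast; ring

lemma dtree_self (I : DyadicSq) : dtree I I = 0 := by
  have : chainSq 0 I I := ⟨fun _ => I, rfl, rfl, fun k hk => absurd hk (by omega)⟩
  simpa using dtree_le this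

/-- Generalized triangle inequality along a finite chain. -/
lemma dtree_le_sum (n : ℕ) (c : ℕ → DyadicSq) :
    dtree (c 0) (c n) ≤ ∑ k ∈ Finset.range n, dtree (c k) (c (k + 1)) := by
  induction n with
  | zero => simp [dtree_self]
  | succ n ih =>
    rw [Finset.sum_range_succ]
    exact le_trans (dtree_triangle (c 0) (c n) (c (n+1))) (add_le_add_left ih _)

/- ### Moves -/

abbrev SqMove : Type := Option (Fin 2 → Bool)

def stepSq (I : DyadicSq) : SqMove → DyadicSq
  | none => parentSq I
  | some b => (I.1 + 1, fun j => 2 * I.2 j + (cond (b j) 1 0))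

lemma adjSq_step {I J : DyadicSq} (h : adjSq I J) : ∃ s : SqMove, stepSq I s = J := by
  rcases h with h | h
  · exact ⟨none, h⟩
  · refine ⟨some fun j => J.2 j % 2 = 1, ?_⟩
    have h1 : J.1 - 1 = I.1 := congrArg Prod.fst h
    have h2 : ∀ j, Int.ediv (J.2 j) 2 = I.2 j := fun j => congrFun (congrArg Prod.snd h) j
    refine Prod.ext (by simp [stepSq]; omega) ?_
    funext j
    show 2 * I.2 j + _ = J.2 j
    have h2j : J.2 j / 2 = I.2 j := h2 j
    have hm : J.2 j % 2 = 0 ∨ J.2 j % 2 = 1 := Int.emod_two_eq_zero_or_one _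
    rcases hm with hm | hm <;> simp [hm] <;> omega

def walkSq (I : DyadicSq) : List SqMove → DyadicSq
  | [] => I
  | s :: L => walkSq (stepSq I s) L

lemma chainSq_walk {d : ℕ} : ∀ {I J : DyadicSq}, chainSq d I J →
    ∃ L : List SqMove, L.length = d ∧ walkSq I L = J := by
  induction d with
  | zero =>
    rintro I J ⟨c, h0, hd, _⟩
    exact ⟨[], rfl, by rw [walkSq, ← h0, hd]⟩
  | succ d ih =>
    rintro I J ⟨c, h0, hd, ha⟩
    have h1 : adjSq I (c 1) := h0 ▸ ha 0 (by omega)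
    obtain ⟨s, hs⟩ := adjSq_step h1
    have : chainSq d (c 1) J := ⟨fun k => c (k + 1), rfl, hd, fun k hk => ha (k+1) (by omega)⟩
    obtain ⟨L, hL, hW⟩ := ih this
    exact ⟨s :: L, by simp [hL], by rw [walkSq, hs, hW]⟩

/- ### The uniform sum bound -/

open scoped ENNReal NNReal

lemma ofReal_pow8 (d : ℕ) :
    ENNReal.ofReal ((2 : ℝ) ^ (-((3:ℝ) * (d : ℝ)))) = (8 : ℝ≥0∞)⁻¹ ^ d := by
  have hb : (2 : ℝ) ^ (-3 : ℝ) = (8:ℝ)⁻¹ := by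
    rw [show (-3 : ℝ) = -((3:ℕ) : ℝ) by norm_num, Real.rpow_neg (by norm_num),
      Real.rpow_natCast]
    norm_num
  have h1 : (2 : ℝ) ^ (-((3:ℝ) * (d : ℝ))) = ((8:ℝ)⁻¹) ^ d := by
    rw [show -((3:ℝ) * (d:ℝ)) = (-3) * d by ring,
      Real.rpow_mul (by norm_num), Real.rpow_natCast, hb]
  rw [h1, ENNReal.ofReal_pow (by norm_num)]
  congr 1
  rw [show ((8:ℝ)⁻¹) = ((8:ℝ≥0)⁻¹ : ℝ≥0) by simp]
  rw [ENNReal.ofReal_coe_nnreal]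
  simp

lemma sum_treeWeight_le (J : DyadicSq) :
    ∑' K : DyadicSq, treeWeight 3 (dtree J K) ≤ 3 := by
  classical
  set f : DyadicSq → ℝ≥0∞ := fun K => treeWeight 3 (dtree J K) with hf
  -- for K in the support, choose a walk realizing the distance
  have hchoice : ∀ K : Function.support f, ∃ L : List SqMove,
      walkSq J L = (K : DyadicSq) ∧ f K = (8 : ℝ≥0∞)⁻¹ ^ L.length := by
    rintro ⟨K, hK⟩
    have htop : dtree J K ≠ ⊤ := by
      intro h
      apply hK
      simp [hf, h, treeWeight_top]
    obtain ⟨d, hd, hd'⟩ := dtree_spec htop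
    obtain ⟨L, hL, hW⟩ := chainSq_walk hd
    refine ⟨L, hW, ?_⟩
    simp only [hf]
    rw [hd', treeWeight_coe, hL, ofReal_pow8]
  choose φ hφ₁ hφ₂ using hchoice
  have hinj : Function.Injective φ := by
    intro K K' h
    have : (K : DyadicSq) = (K' : DyadicSq) := by rw [← hφ₁ K, ← hφ₁ K', h]
    exact Subtype.ext this
  have key : ∑' K : DyadicSq, f K ≤ ∑' L : List SqMove, (8 : ℝ≥0∞)⁻¹ ^ L.length := by
    rw [← tsum_subtype_eq_of_support_subset (Set.Subset.refl (Function.support f))]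
    calc ∑' K : Function.support f, f K = ∑' K : Function.support f, (8:ℝ≥0∞)⁻¹ ^ (φ K).length := by
          exact tsum_congr hφ₂
    _ ≤ _ := ENNReal.tsum_comp_le_tsum_of_injective hinj _
  refine le_trans key ?_
  -- sum over all lists, grouped by length
  have hlist : ∑' L : List SqMove, (8 : ℝ≥0∞)⁻¹ ^ L.length
      = ∑' p : Σ n : ℕ, Fin n → SqMove, (8 : ℝ≥0∞)⁻¹ ^ p.1 := by
    rw [← (List.equivSigmaTuple (α := SqMove)).symm.tsum_eq
      (f := fun L : List SqMove => (8 : ℝ≥0∞)⁻¹ ^ L.length)]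
    refine tsum_congr fun p => ?_
    congr 1
    simp [List.equivSigmaTuple]
  rw [hlist, ENNReal.tsum_sigma']
  have hcard : ∀ n : ℕ, Fintype.card (Fin n → SqMove) = 5 ^ n := by
    intro n
    simp [SqMove, Fintype.card_fun]
  have hstep : ∀ n : ℕ, ∑' _ : Fin n → SqMove, (8 : ℝ≥0∞)⁻¹ ^ n
      = (5 * 8⁻¹ : ℝ≥0∞) ^ n := by
    intro n
    rw [tsum_fintype, Finset.sum_const, Finset.card_univ, hcard, nsmul_eq_mul, mul_pow]
    push_cast
    ring
  calc ∑' (n : ℕ), ∑' (_ : Fin n → SqMove), (8 : ℝ≥0∞)⁻¹ ^ n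
      = ∑' n : ℕ, (5 * 8⁻¹ : ℝ≥0∞) ^ n := tsum_congr hstep
  _ = (1 - 5 * 8⁻¹)⁻¹ := ENNReal.tsum_geometric _
  _ ≤ 3 := by
      have h : (5 * 8⁻¹ : ℝ≥0∞) = ((5/8 : ℝ≥0) : ℝ≥0∞) := by
        simp [ENNReal.coe_div, div_eq_mul_inv]
      have h2 : (1 : ℝ≥0) - 5/8 = 3/8 := by
        rw [NNReal.sub_def]
        norm_num
        rw [Real.toNNReal_div' (by norm_num)]
        norm_num
      rw [h, ← ENNReal.coe_one, ← ENNReal.coe_sub, h2, ← ENNReal.coe_inv (by norm_num),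
        show (3:ℝ≥0∞) = ((3:ℝ≥0):ℝ≥0∞) by simp, ENNReal.coe_le_coe, ← NNReal.coe_le_coe]
      simp
      norm_num

/- ### Chain sums -/

noncomputable def gW (I J : DyadicSq) : ℝ≥0∞ := treeWeight 3 (dtree I J)

lemma gW_le_one (I J : DyadicSq) : gW I J ≤ 1 := treeWeight_le_one (by norm_num) _

lemma sum_gW_le (J : DyadicSq) : ∑' K : DyadicSq, gW J K ≤ 3 := sum_treeWeight_le J

/-- Sum of the 3-weights over constrained chains, bounded by `3 ^ n`. -/
lemma tsum_chain_le (K₀ : DyadicSq) : ∀ (n : ℕ) (J₀ : DyadicSq),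
    ∑' c : {c : Fin (n + 2) → DyadicSq //
        c 0 = J₀ ∧ c (Fin.last (n + 1)) = K₀},
      ∏ k : Fin (n + 1), gW (c.1 k.castSucc) (c.1 k.succ) ≤ 3 ^ n := by
  intro n
  induction n with
  | zero =>
    intro J₀
    by_cases h : Nonempty {c : Fin 2 → DyadicSq // c 0 = J₀ ∧ c (Fin.last 1) = K₀}
    · obtain ⟨a⟩ := h
      have hsub : ∀ b : {c : Fin 2 → DyadicSq // c 0 = J₀ ∧ c (Fin.last 1) = K₀}, b = a := by
        rintro ⟨b, hb0, hb1⟩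
        obtain ⟨a, ha0, ha1⟩ := a
        have hba : b = a := by
          funext j
          fin_cases j
          · show b 0 = a 0
            rw [hb0, ha0]
          · show b (Fin.last 1) = a (Fin.last 1)
            rw [hb1, ha1]
        exact Subtype.ext hba
      rw [tsum_eq_single a fun b hb => absurd (hsub b) hb]
      have : ∀ c : {c : Fin 2 → DyadicSq // c 0 = J₀ ∧ c (Fin.last 1) = K₀},
          ∏ k : Fin 1, gW (c.1 k.castSucc) (c.1 k.succ) = gW J₀ K₀ := by
        rintro ⟨c, h0, h1⟩
        rw [Fin.prod_univ_one]
        show gW (c (Fin.castSucc 0)) (c (Fin.succ 0)) = gW J₀ K₀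
        rw [show Fin.castSucc (0 : Fin 1) = 0 from rfl,
          show Fin.succ (0 : Fin 1) = Fin.last 1 from rfl, h0, h1]
      rw [this a, pow_zero]
      exact gW_le_one _ _
    · rw [not_nonempty_iff] at h
      rw [tsum_empty]
      simp
  | succ n ih =>
    intro J₀
    set Sub : DyadicSq → Type := fun J₁ => {c : Fin (n + 2) → DyadicSq //
        c 0 = J₁ ∧ c (Fin.last (n + 1)) = K₀} with hSub
    set G : (Σ J₁ : DyadicSq, Sub J₁) → ℝ≥0∞ := fun p =>
      gW J₀ p.1 * ∏ k : Fin (n + 1), gW (p.2.1 k.castSucc) (p.2.1 k.succ) with hG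
    set ψ : {c : Fin (n + 3) → DyadicSq //
        c 0 = J₀ ∧ c (Fin.last (n + 2)) = K₀} → Σ J₁ : DyadicSq, Sub J₁ :=
      fun c => ⟨c.1 1, Fin.tail c.1, rfl, by
        show c.1 (Fin.succ (Fin.last (n+1))) = K₀
        rw [Fin.succ_last]
        exact c.2.2⟩ with hψ
    have hinj : Function.Injective ψ := by
      intro c c' h
      have h2 : Fin.tail c.1 = Fin.tail c'.1 :=
        congrArg (fun p : Σ J₁ : DyadicSq, Sub J₁ => (p.2.1 : Fin (n+2) → DyadicSq)) h
      refine Subtype.ext ?_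
      rw [← Fin.cons_self_tail c.1, ← Fin.cons_self_tail c'.1, h2, c.2.1, c'.2.1]
    have hF : ∀ c : {c : Fin (n + 3) → DyadicSq //
        c 0 = J₀ ∧ c (Fin.last (n + 2)) = K₀},
        ∏ k : Fin (n + 2), gW (c.1 k.castSucc) (c.1 k.succ) = G (ψ c) := by
      rintro ⟨c, h0, h1⟩
      simp only [hG, hψ, Fin.prod_univ_succ, Fin.tail, Fin.castSucc_zero,
        Fin.succ_zero_eq_one, ← Fin.succ_castSucc, h0]
    calc ∑' c : {c : Fin (n + 3) → DyadicSq //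
          c 0 = J₀ ∧ c (Fin.last (n + 2)) = K₀},
        ∏ k : Fin (n + 2), gW (c.1 k.castSucc) (c.1 k.succ)
        = ∑' c, G (ψ c) := tsum_congr hF
      _ ≤ ∑' p : (Σ J₁ : DyadicSq, Sub J₁), G p :=
          ENNReal.tsum_comp_le_tsum_of_injective hinj G
      _ = ∑' J₁ : DyadicSq, ∑' c : Sub J₁,
            gW J₀ J₁ * ∏ k : Fin (n + 1), gW (c.1 k.castSucc) (c.1 k.succ) :=
          ENNReal.tsum_sigma' _
      _ = ∑' J₁ : DyadicSq, gW J₀ J₁ *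
            ∑' c : Sub J₁, ∏ k : Fin (n + 1), gW (c.1 k.castSucc) (c.1 k.succ) := by
          refine tsum_congr fun J₁ => ?_
          rw [ENNReal.tsum_mul_left]
      _ ≤ ∑' J₁ : DyadicSq, gW J₀ J₁ * 3 ^ n := by
          refine ENNReal.tsum_le_tsum fun J₁ => ?_
          exact mul_le_mul_right (ih J₁) _
      _ = (∑' J₁ : DyadicSq, gW J₀ J₁) * 3 ^ n := ENNReal.tsum_mul_right
      _ ≤ 3 * 3 ^ n := mul_le_mul_left (sum_gW_le J₀) _
      _ = 3 ^ (n + 1) := by rw [pow_succ]; ring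


lemma treeWeight_prod (a : ℝ) {ι : Type*} (s : Finset ι) (d : ι → ℕ∞) :
    treeWeight a (∑ i ∈ s, d i) = ∏ i ∈ s, treeWeight a (d i) := by
  classical
  induction s using Finset.cons_induction with
  | empty => simp [treeWeight_zero]
  | cons i s hi ih => rw [Finset.sum_cons, Finset.prod_cons, treeWeight_add, ih]

lemma dtree_le_chain_sum {n : ℕ} (c : Fin (n + 2) → DyadicSq) :
    dtree (c 0) (c (Fin.last (n + 1)))
      ≤ ∑ k : Fin (n + 1), dtree (c k.castSucc) (c k.succ) := by
  set cc : ℕ → DyadicSq := fun i => c ⟨min i (n+1), by omega⟩ with hcc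
  have key := dtree_le_sum (n+1) cc
  have e0 : cc 0 = c 0 := congrArg c (Fin.ext (by simp))
  have elast : cc (n+1) = c (Fin.last (n+1)) := congrArg c (Fin.ext (by simp [Fin.last]))
  rw [e0, elast] at key
  refine key.trans (le_of_eq ?_)
  rw [← Fin.sum_univ_eq_sum_range (fun i => dtree (cc i) (cc (i+1))) (n+1)]
  refine Finset.sum_congr rfl fun k _ => ?_
  have hk : (k : ℕ) ≤ n := by omega
  have e1 : cc (k : ℕ) = c k.castSucc :=
    congrArg c (Fin.ext (by simp only [Fin.coe_castSucc]; omega))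
  have e2 : cc ((k : ℕ) + 1) = c k.succ :=
    congrArg c (Fin.ext (by simp only [Fin.val_succ]; omega))
  simp only [e1, e2]

theorem neumann_chain_sum_estimate (κ : ℕ) (hκ : 4 ≤ κ) :
    ∃ ε₀ : ℝ, 0 < ε₀ ∧ ∃ C : ℝ, 0 < C ∧
      ∀ ε : ℝ, 0 < ε → ε ≤ ε₀ → ∀ J₀ K₀ : DyadicSq,
        ∑' n : ℕ,
          ∑' c : {c : Fin (n + 2) → DyadicSq //
              c 0 = J₀ ∧ c (Fin.last (n + 1)) = K₀ ∧
              ∀ k : Fin (n + 1), c k.castSucc ≠ c k.succ},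
            ∏ k : Fin (n + 1),
              ENNReal.ofReal ε * treeWeight (κ : ℝ) (dtree (c.1 k.castSucc) (c.1 k.succ))
          ≤ ENNReal.ofReal (C * ε) * treeWeight ((κ : ℝ) - 3) (dtree J₀ K₀) := by
  refine ⟨1/6, by norm_num, 2, by norm_num, fun ε hε hε₀ J₀ K₀ => ?_⟩
  set W := treeWeight ((κ : ℝ) - 3) (dtree J₀ K₀) with hW
  -- pointwise bound on each chain
  have hpoint : ∀ (n : ℕ) (c : Fin (n + 2) → DyadicSq), c 0 = J₀ →
      c (Fin.last (n + 1)) = K₀ →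
      ∏ k : Fin (n + 1),
          ENNReal.ofReal ε * treeWeight (κ : ℝ) (dtree (c k.castSucc) (c k.succ))
        ≤ ENNReal.ofReal ε ^ (n + 1) *
          (W * ∏ k : Fin (n + 1), gW (c k.castSucc) (c k.succ)) := by
    intro n c h0 h1
    rw [Finset.prod_mul_distrib, Finset.prod_const, Finset.card_univ, Fintype.card_fin]
    refine mul_le_mul_right ?_ _
    have hsplit : ∀ k : Fin (n + 1),
        treeWeight (κ : ℝ) (dtree (c k.castSucc) (c k.succ))
          = treeWeight ((κ : ℝ) - 3) (dtree (c k.castSucc) (c k.succ)) *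
            gW (c k.castSucc) (c k.succ) := by
      intro k
      rw [gW, ← treeWeight_add_exp]
      congr 1
      ring
    calc ∏ k : Fin (n + 1), treeWeight (κ : ℝ) (dtree (c k.castSucc) (c k.succ))
        = (∏ k : Fin (n + 1), treeWeight ((κ : ℝ) - 3) (dtree (c k.castSucc) (c k.succ)))
          * ∏ k : Fin (n + 1), gW (c k.castSucc) (c k.succ) := by
          rw [← Finset.prod_mul_distrib]
          exact Finset.prod_congr rfl fun k _ => hsplit k
      _ ≤ W * ∏ k : Fin (n + 1), gW (c k.castSucc) (c k.succ) := by
          refine mul_le_mul_left ?_ _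
          rw [← treeWeight_prod]
          refine treeWeight_anti ?_ ?_
          · have : (4 : ℝ) ≤ (κ : ℝ) := by exact_mod_cast hκ
            linarith
          · have := dtree_le_chain_sum c
            rwa [h0, h1] at this
  -- per-n bound
  have hTn : ∀ n : ℕ,
      ∑' c : {c : Fin (n + 2) → DyadicSq //
          c 0 = J₀ ∧ c (Fin.last (n + 1)) = K₀ ∧
          ∀ k : Fin (n + 1), c k.castSucc ≠ c k.succ},
        ∏ k : Fin (n + 1),
          ENNReal.ofReal ε * treeWeight (κ : ℝ) (dtree (c.1 k.castSucc) (c.1 k.succ))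
      ≤ ENNReal.ofReal ε ^ (n + 1) * (W * 3 ^ n) := by
    intro n
    have step1 : ∑' c : {c : Fin (n + 2) → DyadicSq //
          c 0 = J₀ ∧ c (Fin.last (n + 1)) = K₀ ∧
          ∀ k : Fin (n + 1), c k.castSucc ≠ c k.succ},
        ∏ k : Fin (n + 1), gW (c.1 k.castSucc) (c.1 k.succ)
        ≤ ∑' c : {c : Fin (n + 2) → DyadicSq //
          c 0 = J₀ ∧ c (Fin.last (n + 1)) = K₀},
        ∏ k : Fin (n + 1), gW (c.1 k.castSucc) (c.1 k.succ) := by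
      have hinj : Function.Injective
          (fun c : {c : Fin (n + 2) → DyadicSq //
              c 0 = J₀ ∧ c (Fin.last (n + 1)) = K₀ ∧
              ∀ k : Fin (n + 1), c k.castSucc ≠ c k.succ} =>
            (⟨c.1, c.2.1, c.2.2.1⟩ : {c : Fin (n + 2) → DyadicSq //
              c 0 = J₀ ∧ c (Fin.last (n + 1)) = K₀})) := by
        intro c c' h
        exact Subtype.ext (congrArg (fun x : {c : Fin (n + 2) → DyadicSq // c 0 = J₀ ∧ c (Fin.last (n + 1)) = K₀} => x.1) h)
      exact ENNReal.tsum_comp_le_tsum_of_injective hinj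
        (fun c => ∏ k : Fin (n + 1), gW (c.1 k.castSucc) (c.1 k.succ))
    calc ∑' c : {c : Fin (n + 2) → DyadicSq //
          c 0 = J₀ ∧ c (Fin.last (n + 1)) = K₀ ∧
          ∀ k : Fin (n + 1), c k.castSucc ≠ c k.succ},
        ∏ k : Fin (n + 1),
          ENNReal.ofReal ε * treeWeight (κ : ℝ) (dtree (c.1 k.castSucc) (c.1 k.succ))
        ≤ ∑' c : {c : Fin (n + 2) → DyadicSq //
            c 0 = J₀ ∧ c (Fin.last (n + 1)) = K₀ ∧
            ∀ k : Fin (n + 1), c k.castSucc ≠ c k.succ},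
          ENNReal.ofReal ε ^ (n + 1) *
            (W * ∏ k : Fin (n + 1), gW (c.1 k.castSucc) (c.1 k.succ)) :=
        ENNReal.tsum_le_tsum fun c => hpoint n c.1 c.2.1 c.2.2.1
      _ = ENNReal.ofReal ε ^ (n + 1) * (W *
            ∑' c : {c : Fin (n + 2) → DyadicSq //
              c 0 = J₀ ∧ c (Fin.last (n + 1)) = K₀ ∧
              ∀ k : Fin (n + 1), c k.castSucc ≠ c k.succ},
            ∏ k : Fin (n + 1), gW (c.1 k.castSucc) (c.1 k.succ)) := by
          rw [ENNReal.tsum_mul_left, ENNReal.tsum_mul_left]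
      _ ≤ ENNReal.ofReal ε ^ (n + 1) * (W * 3 ^ n) := by
          refine mul_le_mul_right (mul_le_mul_right ?_ _) _
          exact step1.trans (tsum_chain_le K₀ n J₀)
  -- sum over n
  have hgeo : ENNReal.ofReal ε * 3 ≤ 2⁻¹ := by
    have h1 : ENNReal.ofReal ε ≤ ENNReal.ofReal (1/6) := ENNReal.ofReal_le_ofReal hε₀
    have h2 : ENNReal.ofReal (1/6) * 3 = 2⁻¹ := by
      rw [ENNReal.ofReal_div_of_pos (by norm_num)]
      norm_num
      rw [show (6 : ℝ≥0∞) = 2 * 3 by norm_num,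
        ENNReal.mul_inv (by norm_num) (by norm_num),
        mul_assoc, ENNReal.inv_mul_cancel (by norm_num) (by norm_num), mul_one]
    calc ENNReal.ofReal ε * 3 ≤ ENNReal.ofReal (1/6) * 3 := mul_le_mul_left h1 _
    _ = 2⁻¹ := h2
  calc ∑' n : ℕ,
        ∑' c : {c : Fin (n + 2) → DyadicSq //
            c 0 = J₀ ∧ c (Fin.last (n + 1)) = K₀ ∧
            ∀ k : Fin (n + 1), c k.castSucc ≠ c k.succ},
          ∏ k : Fin (n + 1),
            ENNReal.ofReal ε * treeWeight (κ : ℝ) (dtree (c.1 k.castSucc) (c.1 k.succ))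
      ≤ ∑' n : ℕ, ENNReal.ofReal ε ^ (n + 1) * (W * 3 ^ n) :=
        ENNReal.tsum_le_tsum hTn
    _ = ∑' n : ℕ, (ENNReal.ofReal ε * W) * (ENNReal.ofReal ε * 3) ^ n := by
        refine tsum_congr fun n => ?_
        rw [pow_succ', mul_pow]
        ring
    _ = (ENNReal.ofReal ε * W) * ∑' n : ℕ, (ENNReal.ofReal ε * 3) ^ n :=
        ENNReal.tsum_mul_left
    _ ≤ (ENNReal.ofReal ε * W) * ∑' n : ℕ, (2⁻¹ : ℝ≥0∞) ^ n := by
        refine mul_le_mul_right (ENNReal.tsum_le_tsum fun n => ?_) _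
        exact pow_le_pow_left' hgeo n
    _ = (ENNReal.ofReal ε * W) * 2 := by
        rw [ENNReal.tsum_geometric, ENNReal.one_sub_inv_two]
        simp
    _ = ENNReal.ofReal (2 * ε) * W := by
        rw [ENNReal.ofReal_mul (by norm_num)]
        have : ENNReal.ofReal 2 = 2 := by norm_num
        rw [this]
        ring
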